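/- Let μ₀ be a commutative multiplication on A whose associator satisfies 2A_{μ₀}(x,y,z) − A_{μ₀}(y,x,z) − A_{μ₀}(z,y,x) − A_{μ₀}(x,z,y) + A_{μ₀}(y,z,x) = 0 for all x,y,z. For bilinear maps φ,φ' on A set D(φ,φ')(x,y,z) = φ(x,φ'(y,z)) − φ(φ'(x,y),z). Let (φ_i)_{i≥0} satisfy φ₀ = μ₀ and, for every k ≥ 0 and all x,y,z ∈ A: ∑_{i+j=k} [2·D(φ_i,φ_j)(x,y,z) − D(φ_i,φ_j)(y,x,z) − D(φ_i,φ_j)(z,y,x) − D(φ_i,φ_j)(x,z,y) + D(φ_i,φ_j)(y,z,x)] = 0. Then the skew-symmetric part ψ₁ of φ₁ satisfies the Jacobi identity, and setting L(x,y,z) = ψ₁(μ₀(x,y),z) − μ₀(x,ψ₁(y,z)) − μ₀(y,ψ₁(x,z)), one has L(x,y,z) = L(z,y,x) for all x,y,z ∈ A; that is, (A,μ₀,ψ₁) is a pseudo-Poisson algebra. -/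

import Mathlib

open Finset

/-- The associator of a bilinear multiplication. -/
def assocMap {K A : Type*} [Field K] [AddCommGroup A] [Module K A]
    (μ : A →ₗ[K] A →ₗ[K] A) (x y z : A) : A :=
  μ x (μ y z) - μ (μ x y) z

/-- The skew-symmetric part of a bilinear multiplication. -/
def skewPart {K A : Type*} [Field K] [AddCommGroup A] [Module K A]
    (φ : A →ₗ[K] A →ₗ[K] A) (x y : A) : A :=
  φ x y - φ y x

/-- `D(φ,φ')(x,y,z) = φ(x,φ'(y,z)) − φ(φ'(x,y),z)`. -/
def defD {K A : Type*} [Field K] [AddCommGroup A] [Module K A]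
    (φ φ' : A →ₗ[K] A →ₗ[K] A) (x y z : A) : A :=
  φ x (φ' y z) - φ (φ' x y) z

/-- The Leibniz operator `L(x,y,z) = ψ₁(μ₀(x,y),z) − μ₀(x,ψ₁(y,z)) − μ₀(y,ψ₁(x,z))`. -/
def leibnizOp {K A : Type*} [Field K] [AddCommGroup A] [Module K A]
    (μ₀ φ₁ : A →ₗ[K] A →ₗ[K] A) (x y z : A) : A :=
  skewPart φ₁ (μ₀ x y) z - μ₀ x (skewPart φ₁ y z) - μ₀ y (skewPart φ₁ x z)

/-- For `v = 2Id − τ₁₂ − τ₁₃ − τ₂₃ + c`: any `v`-formal deformation of a commutative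
`v`-multiplication `μ₀` gives a pseudo-Poisson algebra `(A, μ₀, ψ₁)`:
`ψ₁` satisfies the Jacobi identity and `L(x,y,z) = L(z,y,x)`. -/
theorem rank5_deformation_pseudo_poisson {K A : Type*} [Field K] [CharZero K]
    [AddCommGroup A] [Module K A]
    (μ₀ : A →ₗ[K] A →ₗ[K] A)
    (hcomm : ∀ x y : A, μ₀ x y = μ₀ y x)
    (hv : ∀ x y z : A,
      (2 : K) • assocMap μ₀ x y z - assocMap μ₀ y x z - assocMap μ₀ z y x -
        assocMap μ₀ x z y + assocMap μ₀ y z x = 0)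
    (φ : ℕ → (A →ₗ[K] A →ₗ[K] A))
    (h0 : φ 0 = μ₀)
    (hdef : ∀ k : ℕ, ∀ x y z : A,
      ∑ p ∈ Finset.HasAntidiagonal.antidiagonal k,
        ((2 : K) • defD (φ p.1) (φ p.2) x y z - defD (φ p.1) (φ p.2) y x z -
          defD (φ p.1) (φ p.2) z y x - defD (φ p.1) (φ p.2) x z y +
          defD (φ p.1) (φ p.2) y z x) = 0) :
    (∀ x y z : A,
      skewPart (φ 1) x (skewPart (φ 1) y z) + skewPart (φ 1) y (skewPart (φ 1) z x) +
        skewPart (φ 1) z (skewPart (φ 1) x y) = 0) ∧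
    (∀ x y z : A, leibnizOp μ₀ (φ 1) x y z = leibnizOp μ₀ (φ 1) z y x) := by
  have E1 : ∀ u v w : A,
      ((2 : K) • defD μ₀ (φ 1) u v w - defD μ₀ (φ 1) v u w - defD μ₀ (φ 1) w v u -
        defD μ₀ (φ 1) u w v + defD μ₀ (φ 1) v w u) +
      ((2 : K) • defD (φ 1) μ₀ u v w - defD (φ 1) μ₀ v u w - defD (φ 1) μ₀ w v u -
        defD (φ 1) μ₀ u w v + defD (φ 1) μ₀ v w u) = 0 := by
    intro u v w
    have h := hdef 1 u v w
    rw [Finset.Nat.sum_antidiagonal_eq_sum_range_succ_mk] at h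
    simp only [Finset.sum_range_succ, Finset.sum_range_zero, zero_add, h0] at h
    norm_num at h
    linear_combination (norm := module) h
  have E2 : ∀ u v w : A,
      ((2 : K) • defD μ₀ (φ 2) u v w - defD μ₀ (φ 2) v u w - defD μ₀ (φ 2) w v u -
        defD μ₀ (φ 2) u w v + defD μ₀ (φ 2) v w u) +
      ((2 : K) • defD (φ 1) (φ 1) u v w - defD (φ 1) (φ 1) v u w - defD (φ 1) (φ 1) w v u -
        defD (φ 1) (φ 1) u w v + defD (φ 1) (φ 1) v w u) +
      ((2 : K) • defD (φ 2) μ₀ u v w - defD (φ 2) μ₀ v u w - defD (φ 2) μ₀ w v u -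
        defD (φ 2) μ₀ u w v + defD (φ 2) μ₀ v w u) = 0 := by
    intro u v w
    have h := hdef 2 u v w
    rw [Finset.Nat.sum_antidiagonal_eq_sum_range_succ_mk] at h
    simp only [Finset.sum_range_succ, Finset.sum_range_zero, zero_add, h0] at h
    norm_num at h
    linear_combination (norm := module) h
  have cO1 : ∀ u v w : A, μ₀ ((φ 1) u v) w = μ₀ w ((φ 1) u v) := fun u v w => hcomm _ _
  have cL1 : ∀ u v w : A, (φ 1) (μ₀ u v) w = (φ 1) (μ₀ v u) w := fun u v w => by
    rw [hcomm u v]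
  have cR1 : ∀ u v w : A, (φ 1) u (μ₀ v w) = (φ 1) u (μ₀ w v) := fun u v w => by
    rw [hcomm v w]
  have cO2 : ∀ u v w : A, μ₀ ((φ 2) u v) w = μ₀ w ((φ 2) u v) := fun u v w => hcomm _ _
  have cL2 : ∀ u v w : A, (φ 2) (μ₀ u v) w = (φ 2) (μ₀ v u) w := fun u v w => by
    rw [hcomm u v]
  have cR2 : ∀ u v w : A, (φ 2) u (μ₀ v w) = (φ 2) u (μ₀ w v) := fun u v w => by
    rw [hcomm v w]
  constructor
  · intro x y z
    simp only [skewPart, map_sub, LinearMap.sub_apply]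
    simp only [defD] at E2
    linear_combination (norm := module)
      ((1:K)/3) • (E2 x y z + E2 y z x + E2 z x y)
      + cO2 x y z + cO2 y z x + cO2 z x y - cO2 x z y - cO2 y x z - cO2 z y x
      + cL2 x y z - cL2 x z y + cL2 y z x
      - cR2 x y z + cR2 y x z - cR2 z x y
  · intro x y z
    simp only [leibnizOp, skewPart, map_sub, LinearMap.sub_apply]
    simp only [defD] at E1
    linear_combination (norm := module)
      ((2:K)/3) • E1 x y z + E1 x z y + ((2:K)/3) • E1 y z x - ((1:K)/3) • E1 z x y
      + cO1 x z y - cO1 y x z + cO1 y z x - cO1 z x y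
      + cL1 x y z + cL1 x z y + cL1 y z x
      + cR1 y x z
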